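/- Let f : ℝⁿ × ℝᵐ → ℝⁿ, φ : ℝⁿ × ℝᵐ → ℝᵏ, and L : ℝⁿ × ℝᵐ → ℝ be continuously differentiable. Let (q,u,p,λ) : [t₀,t₁] → ℝⁿ × ℝᵐ × ℝⁿ × ℝᵏ be a continuously differentiable solution of the augmented adjoint DAE system: q̇ = f(q,u), ṗ = −D_qf(q,u)ᵀ p − D_qφ(q,u)ᵀ λ − ∇_qL(q,u), 0 = φ(q,u), 0 = D_uf(q,u)ᵀ p + D_uφ(q,u)ᵀ λ + ∇_uL(q,u), and let (δq, δu) : [t₀,t₁] → ℝⁿ × ℝᵐ satisfy the variational equations along (q,u): δq̇ = D_qf(q,u) δq + D_uf(q,u) δu and 0 = D_qφ(q,u) δq + D_uφ(q,u) δu. Then for all t ∈ [t₀,t₁], d/dt ⟨p(t), δq(t)⟩ = −⟨∇_qL(q(t),u(t)), δq(t)⟩ − ⟨∇_uL(q(t),u(t)), δu(t)⟩. -/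

import Mathlib

open scoped RealInnerProductSpace

noncomputable section

abbrev Euc (n : ℕ) : Type := EuclideanSpace ℝ (Fin n)

/-- Partial Jacobian `D_qF(q,u)` with respect to the first argument. -/
noncomputable def Dq {n m k : ℕ} (F : Euc n × Euc m → Euc k) (q : Euc n) (u : Euc m) :
    Euc n →L[ℝ] Euc k :=
  fderiv ℝ (fun q' => F (q', u)) q

/-- Partial Jacobian `D_uF(q,u)` with respect to the second argument. -/
noncomputable def Du {n m k : ℕ} (F : Euc n × Euc m → Euc k) (q : Euc n) (u : Euc m) :
    Euc m →L[ℝ] Euc k :=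
  fderiv ℝ (fun u' => F (q, u')) u

/-- `D_qF(q,u)ᵀ`, the transpose (adjoint) of the partial Jacobian in `q`. -/
noncomputable def DqT {n m k : ℕ} (F : Euc n × Euc m → Euc k) (q : Euc n) (u : Euc m) :
    Euc k →L[ℝ] Euc n :=
  ContinuousLinearMap.adjoint (Dq F q u)

/-- `D_uF(q,u)ᵀ`, the transpose (adjoint) of the partial Jacobian in `u`. -/
noncomputable def DuT {n m k : ℕ} (F : Euc n × Euc m → Euc k) (q : Euc n) (u : Euc m) :
    Euc k →L[ℝ] Euc m :=
  ContinuousLinearMap.adjoint (Du F q u)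

/-- Partial gradient `∇_qL(q,u)`. -/
noncomputable def gradQ {n m : ℕ} (L : Euc n × Euc m → ℝ) (q : Euc n) (u : Euc m) : Euc n :=
  gradient (fun q' => L (q', u)) q

/-- Partial gradient `∇_uL(q,u)`. -/
noncomputable def gradU {n m : ℕ} (L : Euc n × Euc m → ℝ) (q : Euc n) (u : Euc m) : Euc m :=
  gradient (fun u' => L (q, u')) u

set_option maxHeartbeats 1000000 in
/-- along a solution of the augmented adjoint DAE system and a solution
of the variational equations covering the same `(q,u)`,
`d/dt ⟨p, δq⟩ = −⟨∇_qL(q,u), δq⟩ − ⟨∇_uL(q,u), δu⟩`. -/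
theorem augmented_adjoint_DAE_quadratic_identity {n m k : ℕ}
    (f : Euc n × Euc m → Euc n) (φ : Euc n × Euc m → Euc k) (L : Euc n × Euc m → ℝ)
    (hf : ContDiff ℝ 1 f) (hφ : ContDiff ℝ 1 φ) (hL : ContDiff ℝ 1 L)
    (t₀ t₁ : ℝ)
    (q : ℝ → Euc n) (u : ℝ → Euc m) (p : ℝ → Euc n) (lam : ℝ → Euc k)
    (δq : ℝ → Euc n) (δu : ℝ → Euc m)
    (hq : ContDiff ℝ 1 q) (hu : ContDiff ℝ 1 u) (hp : ContDiff ℝ 1 p)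
    (hlam : ContDiff ℝ 1 lam) (hδq : ContDiff ℝ 1 δq) (hδu : ContDiff ℝ 1 δu)
    (hqode : ∀ t ∈ Set.Icc t₀ t₁, HasDerivAt q (f (q t, u t)) t)
    (hpode : ∀ t ∈ Set.Icc t₀ t₁,
      HasDerivAt p (-(DqT f (q t) (u t) (p t)) - DqT φ (q t) (u t) (lam t)
        - gradQ L (q t) (u t)) t)
    (hconstr : ∀ t ∈ Set.Icc t₀ t₁, φ (q t, u t) = 0)
    (hadj : ∀ t ∈ Set.Icc t₀ t₁,
      DuT f (q t) (u t) (p t) + DuT φ (q t) (u t) (lam t) + gradU L (q t) (u t) = 0)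
    (hδqode : ∀ t ∈ Set.Icc t₀ t₁,
      HasDerivAt δq (Dq f (q t) (u t) (δq t) + Du f (q t) (u t) (δu t)) t)
    (hδconstr : ∀ t ∈ Set.Icc t₀ t₁,
      Dq φ (q t) (u t) (δq t) + Du φ (q t) (u t) (δu t) = 0) :
    ∀ t ∈ Set.Icc t₀ t₁,
      HasDerivAt (fun s => ⟪p s, δq s⟫)
        (-⟪gradQ L (q t) (u t), δq t⟫ - ⟪gradU L (q t) (u t), δu t⟫) t := by
  intro t ht
  have hd := HasDerivAt.inner ℝ (hpode t ht) (hδqode t ht)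
  refine HasDerivAt.congr_deriv hd ?_
  have h1 : Dq φ (q t) (u t) (δq t) = -(Du φ (q t) (u t) (δu t)) := by
    have h := hδconstr t ht
    rw [eq_neg_iff_add_eq_zero]; exact h
  have h2 : DuT f (q t) (u t) (p t) = -(DuT φ (q t) (u t) (lam t)) - gradU L (q t) (u t) := by
    have h := hadj t ht
    rw [neg_sub_left, eq_neg_iff_add_eq_zero, ← add_assoc]
    rw [add_right_comm]; exact h
  simp only [DqT, DuT] at h2 ⊢
  rw [inner_add_right, inner_sub_left, inner_sub_left, inner_neg_left]
  rw [ContinuousLinearMap.adjoint_inner_left, ContinuousLinearMap.adjoint_inner_left,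
    ← ContinuousLinearMap.adjoint_inner_left (Du f (q t) (u t)), h1, h2]
  simp only [inner_sub_left, inner_neg_left, inner_neg_right,
    ContinuousLinearMap.adjoint_inner_left]
  ring

end
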